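/- In a maximal [r,s,t]-coloring of a graph G with size-2 classes U_1,…,U_s, if for every pair of distinct indices j, j' there are exactly 2 edges between U_j and U_{j'}, then the subgraph induced by the union of all U_j is isomorphic to the disjoint union of two complete graphs K_s. -/

import Mathlib

open Finset

variable {V : Type*}

/-- `P` is the set of color classes of an `[r,s,t]`-coloring of `G`:
a partition of the vertices into independent sets, with `r` classes of size 3,
`s` classes of size 2 and `t` singleton classes. -/
def IsRST [Fintype V] [DecidableEq V] (G : SimpleGraph V) (P : Finset (Finset V))
    (r s t : ℕ) : Prop :=
  (∀ v : V, ∃! A, A ∈ P ∧ v ∈ A) ∧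
  (∀ A ∈ P, ∀ u ∈ A, ∀ w ∈ A, ¬ G.Adj u w) ∧
  (P.filter (fun A => A.card = 3)).card = r ∧
  (P.filter (fun A => A.card = 2)).card = s ∧
  (P.filter (fun A => A.card = 1)).card = t ∧
  (∀ A ∈ P, A.card = 1 ∨ A.card = 2 ∨ A.card = 3)

/-- A maximal `[r,s,t]`-coloring: for any other `[r',s',t']`-coloring,
either `r > r'`, or `r = r'` and `s ≥ s'`. -/
def IsMaxRST [Fintype V] [DecidableEq V] (G : SimpleGraph V) (P : Finset (Finset V))
    (r s t : ℕ) : Prop :=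
  IsRST G P r s t ∧
  ∀ (P' : Finset (Finset V)) (r' s' t' : ℕ), IsRST G P' r' s' t' →
    r' < r ∨ (r' = r ∧ s' ≤ s)

/-- `eB G X Y` is the number of edges with one endpoint in `X` and the other in `Y`. -/
def eB [Fintype V] [DecidableEq V] (G : SimpleGraph V) [DecidableRel G.Adj]
    (X Y : Finset V) : ℕ :=
  ((X ×ˢ Y).filter fun p => G.Adj p.1 p.2).card

/-- `G` is equitably `k`-colorable: a proper `k`-coloring whose color classes
have sizes differing pairwise by at most 1. -/
def EqColorable [Fintype V] (G : SimpleGraph V) (k : ℕ) : Prop :=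
  ∃ C : V → Fin k, (∀ u v, G.Adj u v → C u ≠ C v) ∧
    ∀ i j : Fin k,
      (Finset.univ.filter fun v => C v = i).card ≤
        (Finset.univ.filter fun v => C v = j).card + 1


section AuxLemmas
set_option linter.unusedSectionVars false
variable [Fintype V] [DecidableEq V] {G : SimpleGraph V} {P : Finset (Finset V)} {r s t : ℕ}

lemma rst_disjoint (hP : IsRST G P r s t) :
    ∀ A ∈ P, ∀ B ∈ P, A ≠ B → Disjoint A B := by
  intro A hA B hB hne
  rw [Finset.disjoint_left]
  intro v hvA hvB
  obtain ⟨C, _, hC⟩ := hP.1 v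
  exact hne ((hC A ⟨hA, hvA⟩).trans (hC B ⟨hB, hvB⟩).symm)

lemma rst_swap (hP : IsRST G P r s t) (S T : Finset (Finset V)) (hS : S ⊆ P)
    (hUnion : T.biUnion id = S.biUnion id)
    (hTdisj : ∀ A ∈ T, ∀ B ∈ T, A ≠ B → Disjoint A B)
    (hTind : ∀ A ∈ T, ∀ u ∈ A, ∀ w ∈ A, ¬ G.Adj u w)
    (hTcard : ∀ A ∈ T, A.card = 1 ∨ A.card = 2 ∨ A.card = 3) :
    IsRST G (P \ S ∪ T)
      (((P \ S ∪ T).filter (fun A => A.card = 3)).card)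
      (((P \ S ∪ T).filter (fun A => A.card = 2)).card)
      (((P \ S ∪ T).filter (fun A => A.card = 1)).card) := by
  refine ⟨?_, ?_, rfl, rfl, rfl, ?_⟩
  · intro v
    by_cases hv : v ∈ S.biUnion id
    · rw [← hUnion] at hv
      obtain ⟨A, hA, hvA⟩ := Finset.mem_biUnion.mp hv
      refine ⟨A, ⟨Finset.mem_union_right _ hA, hvA⟩, ?_⟩
      rintro B ⟨hB, hvB⟩
      rcases Finset.mem_union.mp hB with hB' | hB'
      · exfalso
        obtain ⟨hBP, hBS⟩ := Finset.mem_sdiff.mp hB'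
        -- v ∈ some C ∈ S ⊆ P, and v ∈ B ∈ P, B ∉ S
        rw [hUnion] at hv
        obtain ⟨C, hCS, hvC⟩ := Finset.mem_biUnion.mp hv
        obtain ⟨D, _, hD⟩ := hP.1 v
        exact hBS (((hD B ⟨hBP, hvB⟩).trans (hD C ⟨hS hCS, hvC⟩).symm) ▸ hCS)
      · by_contra hne
        exact (Finset.disjoint_left.mp (hTdisj B hB' A hA hne) hvB) hvA
    · obtain ⟨A, ⟨hAP, hvA⟩, hA⟩ := hP.1 v
      have hAS : A ∉ S := fun hAS => hv (Finset.mem_biUnion.mpr ⟨A, hAS, hvA⟩)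
      refine ⟨A, ⟨Finset.mem_union_left _ (Finset.mem_sdiff.mpr ⟨hAP, hAS⟩), hvA⟩, ?_⟩
      rintro B ⟨hB, hvB⟩
      rcases Finset.mem_union.mp hB with hB' | hB'
      · exact hA B ⟨(Finset.mem_sdiff.mp hB').1, hvB⟩
      · exact absurd (hUnion ▸ Finset.mem_biUnion.mpr ⟨B, hB', hvB⟩) hv
  · intro A hA
    rcases Finset.mem_union.mp hA with hA' | hA'
    · exact hP.2.1 A (Finset.mem_sdiff.mp hA').1
    · exact hTind A hA'
  · intro A hA
    rcases Finset.mem_union.mp hA with hA' | hA'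
    · exact hP.2.2.2.2.2 A (Finset.mem_sdiff.mp hA').1
    · exact hTcard A hA'

lemma rst_count_disjoint (hP : IsRST G P r s t) (S T : Finset (Finset V)) (hS : S ⊆ P)
    (hUnion : T.biUnion id = S.biUnion id) (hTne : ∀ A ∈ T, A.Nonempty) :
    Disjoint (P \ S) T := by
  rw [Finset.disjoint_right]
  intro A hAT hA
  obtain ⟨hAP, hAS⟩ := Finset.mem_sdiff.mp hA
  obtain ⟨v, hv⟩ := hTne A hAT
  have hvS : v ∈ S.biUnion id := hUnion ▸ Finset.mem_biUnion.mpr ⟨A, hAT, hv⟩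
  obtain ⟨C, hCS, hvC⟩ := Finset.mem_biUnion.mp hvS
  obtain ⟨D, _, hD⟩ := hP.1 v
  exact hAS (((hD A ⟨hAP, hv⟩).trans (hD C ⟨hS hCS, hvC⟩).symm) ▸ hCS)

lemma rst_count (S T : Finset (Finset V)) (hS : S ⊆ P)
    (hdisj : Disjoint (P \ S) T) (p : Finset V → Prop) [DecidablePred p] :
    ((P \ S ∪ T).filter p).card + (S.filter p).card = (P.filter p).card + (T.filter p).card := by
  rw [Finset.filter_union, Finset.card_union_of_disjoint
    (Finset.disjoint_filter_filter hdisj)]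
  have h1 : (P \ S).filter p = P.filter p \ S.filter p := by
    ext A; simp only [Finset.mem_filter, Finset.mem_sdiff]; tauto
  rw [h1, Finset.card_sdiff_of_subset (Finset.filter_subset_filter p hS)]
  have := Finset.card_le_card (Finset.filter_subset_filter p hS)
  omega

lemma eB_eq_sum [DecidableRel G.Adj] (X Y : Finset V) :
    eB G X Y = ∑ v ∈ X, (Y.filter (G.Adj v)).card := by
  rw [eB, Finset.card_eq_sum_card_fiberwise
    (f := Prod.fst) (t := X) (fun p hp => (Finset.mem_product.mp (Finset.mem_filter.mp hp).1).1)]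
  refine Finset.sum_congr rfl fun v hv => ?_
  apply Finset.card_bij (fun p _ => p.2)
  · intro p hp
    simp only [Finset.mem_filter, Finset.mem_product] at hp ⊢
    exact ⟨hp.1.1.2, hp.2 ▸ hp.1.2⟩
  · intro p hp q hq hpq
    simp only [Finset.mem_filter] at hp hq
    exact Prod.ext (hp.2.trans hq.2.symm) hpq
  · intro w hw
    simp only [Finset.mem_filter] at hw
    exact ⟨(v, w), by simp [Finset.mem_filter, Finset.mem_product, hv, hw.1, hw.2], rfl⟩

lemma exists_adj_of_max (h : IsMaxRST G P r s t) {U U' : Finset V}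
    (hU : U ∈ P) (hU2 : U.card = 2) (hU' : U' ∈ P) (hU'2 : U'.card = 2) (hne : U ≠ U')
    {v : V} (hv : v ∈ U) : ∃ w ∈ U', G.Adj v w := by
  by_contra hno
  push_neg at hno
  have hP := h.1
  have hdUU' : Disjoint U U' := rst_disjoint hP U hU U' hU' hne
  -- the other element of U
  obtain ⟨a, b, hab, hUab⟩ := Finset.card_eq_two.mp hU2
  have hu : ∃ u, u ∈ U ∧ u ≠ v ∧ U = {v, u} := by
    subst hUab
    rcases Finset.mem_insert.mp hv with rfl | hvb
    · refine ⟨b, ?_, fun hbv => hab hbv.symm, ?_⟩ <;> simp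
    · have hvb' : v = b := by simpa using hvb
      subst hvb'
      exact ⟨a, by simp, hab, Finset.pair_comm a v⟩
  obtain ⟨u, huU, huv, hUvu⟩ := hu
  have hvU' : v ∉ U' := Finset.disjoint_left.mp hdUU' hv
  have huU' : u ∉ U' := Finset.disjoint_left.mp hdUU' huU
  set X : Finset V := insert v U' with hX
  set S : Finset (Finset V) := {U, U'} with hS
  set T : Finset (Finset V) := {X, {u}} with hT
  have hXcard : X.card = 3 := by rw [hX, Finset.card_insert_of_notMem hvU', hU'2]
  have hXne : X ≠ {u} := by
    intro heq
    have : v ∈ ({u} : Finset V) := heq ▸ Finset.mem_insert_self v U'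
    exact huv (Finset.mem_singleton.mp this).symm
  have hSsub : S ⊆ P := by
    intro A hA
    rcases Finset.mem_insert.mp hA with rfl | hA'
    · exact hU
    · rw [Finset.mem_singleton.mp hA']; exact hU'
  have hTU : T.biUnion id = X ∪ {u} := by
    rw [hT, Finset.biUnion_insert, Finset.singleton_biUnion]; rfl
  have hSU : S.biUnion id = U ∪ U' := by
    rw [hS, Finset.biUnion_insert, Finset.singleton_biUnion]; rfl
  have hUnion : T.biUnion id = S.biUnion id := by
    rw [hTU, hSU, hX, hUvu]
    ext x
    simp only [Finset.mem_union, Finset.mem_insert, Finset.mem_singleton]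
    tauto
  have hTne : ∀ A ∈ T, A.Nonempty := by
    intro A hA
    rcases Finset.mem_insert.mp hA with rfl | hA'
    · exact ⟨v, Finset.mem_insert_self _ _⟩
    · exact (Finset.mem_singleton.mp hA') ▸ ⟨u, Finset.mem_singleton_self u⟩
  have hTdisj : ∀ A ∈ T, ∀ B ∈ T, A ≠ B → Disjoint A B := by
    have hd : Disjoint X ({u} : Finset V) := by
      simp only [Finset.disjoint_singleton_right, hX, Finset.mem_insert]
      rintro (rfl | hu')
      · exact huv rfl
      · exact huU' hu'
    intro A hA B hB hAB
    rcases Finset.mem_insert.mp hA with rfl | hA' <;>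
      rcases Finset.mem_insert.mp hB with rfl | hB'
    · exact absurd rfl hAB
    · exact (Finset.mem_singleton.mp hB') ▸ hd
    · exact (Finset.mem_singleton.mp hA') ▸ hd.symm
    · exact absurd ((Finset.mem_singleton.mp hA').trans (Finset.mem_singleton.mp hB').symm) hAB
  have hTind : ∀ A ∈ T, ∀ x ∈ A, ∀ y ∈ A, ¬ G.Adj x y := by
    intro A hA x hx y hy
    rcases Finset.mem_insert.mp hA with rfl | hA'
    · rw [hX, Finset.mem_insert] at hx hy
      rcases hx with rfl | hx' <;> rcases hy with rfl | hy'
      · exact G.loopless.irrefl _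
      · exact hno y hy'
      · exact fun hadj => hno x hx' hadj.symm
      · exact hP.2.1 U' hU' x hx' y hy'
    · rw [Finset.mem_singleton.mp hA', Finset.mem_singleton] at hx hy
      rw [hx, hy]; exact G.loopless.irrefl u
  have hTcard : ∀ A ∈ T, A.card = 1 ∨ A.card = 2 ∨ A.card = 3 := by
    intro A hA
    rcases Finset.mem_insert.mp hA with rfl | hA'
    · exact Or.inr (Or.inr hXcard)
    · exact Or.inl ((Finset.mem_singleton.mp hA') ▸ Finset.card_singleton u)
  have hRST := rst_swap hP S T hSsub hUnion hTdisj hTind hTcard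
  have hdisjPT := rst_count_disjoint hP S T hSsub hUnion hTne
  have hcount := rst_count S T hSsub hdisjPT (fun A => A.card = 3)
  have hSfilter : (S.filter (fun A => A.card = 3)).card = 0 := by
    rw [Finset.card_eq_zero, Finset.filter_eq_empty_iff]
    intro A hA
    rcases Finset.mem_insert.mp hA with rfl | hA'
    · omega
    · rw [Finset.mem_singleton.mp hA', hU'2]; omega
  have hTfilter : (T.filter (fun A => A.card = 3)).card = 1 := by
    have : T.filter (fun A => A.card = 3) = {X} := by
      ext A
      simp only [Finset.mem_filter, hT, Finset.mem_insert, Finset.mem_singleton]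
      constructor
      · rintro ⟨rfl | rfl, hc⟩
        · rfl
        · simp at hc
      · rintro rfl; exact ⟨Or.inl rfl, hXcard⟩
    rw [this, Finset.card_singleton]
  rw [hSfilter, hP.2.2.1, hTfilter] at hcount
  rcases h.2 _ _ _ _ hRST with h' | ⟨h', _⟩ <;> omega

lemma pair_adj [DecidableRel G.Adj] (h : IsMaxRST G P r s t) {U U' : Finset V}
    (hU : U ∈ P) (hU2 : U.card = 2) (hU' : U' ∈ P) (hU'2 : U'.card = 2) (hne : U ≠ U')
    (heB : eB G U U' = 2) {v : V} (hv : v ∈ U) {w w' : V}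
    (hw : w ∈ U') (hw' : w' ∈ U') (hww' : w ≠ w') :
    G.Adj v w ↔ ¬ G.Adj v w' := by
  have hcard : (U'.filter (G.Adj v)).card = 1 := by
    obtain ⟨a, b, hab, hUab⟩ := Finset.card_eq_two.mp hU2
    rw [eB_eq_sum, hUab, Finset.sum_pair hab] at heB
    have ha1 : 1 ≤ (U'.filter (G.Adj a)).card := by
      obtain ⟨x, hx, hadj⟩ := exists_adj_of_max h hU hU2 hU' hU'2 hne (hUab ▸ Finset.mem_insert_self a {b})
      exact Finset.card_pos.mpr ⟨x, Finset.mem_filter.mpr ⟨hx, hadj⟩⟩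
    have hb1 : 1 ≤ (U'.filter (G.Adj b)).card := by
      obtain ⟨x, hx, hadj⟩ := exists_adj_of_max h hU hU2 hU' hU'2 hne (hUab ▸ Finset.mem_insert_of_mem (Finset.mem_singleton_self b))
      exact Finset.card_pos.mpr ⟨x, Finset.mem_filter.mpr ⟨hx, hadj⟩⟩
    rcases Finset.mem_insert.mp (hUab ▸ hv) with rfl | hv'
    · omega
    · rw [Finset.mem_singleton.mp hv']; omega
  have hU'eq : U' = {w, w'} := by
    refine (Finset.eq_of_subset_of_card_le ?_ ?_).symm
    · intro x hx
      rcases Finset.mem_insert.mp hx with rfl | hx'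
      · exact hw
      · exact (Finset.mem_singleton.mp hx') ▸ hw'
    · rw [hU'2, Finset.card_insert_of_notMem (Finset.notMem_singleton.mpr hww'), Finset.card_singleton]
  rw [hU'eq] at hcard
  by_cases h1 : G.Adj v w <;> by_cases h2 : G.Adj v w' <;>
    simp only [Finset.filter_insert, Finset.filter_singleton, h1, h2, if_true, if_false] at hcard ⊢
  · rw [Finset.card_insert_of_notMem (Finset.notMem_singleton.mpr hww')] at hcard
    simp at hcard
  · simp [h2]
  · simp [h1, h2]
  · simp at hcard

lemma other_elt {U : Finset V} (hU2 : U.card = 2) {v : V} (hv : v ∈ U) :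
    ∃ u, u ∈ U ∧ u ≠ v ∧ U = {v, u} := by
  obtain ⟨a, b, hab, hUab⟩ := Finset.card_eq_two.mp hU2
  subst hUab
  rcases Finset.mem_insert.mp hv with rfl | hvb
  · refine ⟨b, ?_, fun hbv => hab hbv.symm, ?_⟩ <;> simp
  · have hvb' : v = b := Finset.mem_singleton.mp hvb
    subst hvb'
    exact ⟨a, by simp, hab, Finset.pair_comm a v⟩


set_option maxHeartbeats 1600000 in
lemma adj_trans [DecidableRel G.Adj] (h : IsMaxRST G P r s t)
    (hpa : ∀ U ∈ P, U.card = 2 → ∀ U' ∈ P, U'.card = 2 → U ≠ U' → eB G U U' = 2)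
    {A B C : Finset V} (hA : A ∈ P) (hA2 : A.card = 2) (hB : B ∈ P) (hB2 : B.card = 2)
    (hC : C ∈ P) (hC2 : C.card = 2) (hAB : A ≠ B) (hAC : A ≠ C) (hBC : B ≠ C)
    {x u w : V} (hx : x ∈ A) (hu : u ∈ B) (hw : w ∈ C)
    (hux : G.Adj u x) (hwx : G.Adj w x) : G.Adj u w := by
  by_contra hnadj
  have hP := h.1
  obtain ⟨b2, hb2A, hb2x, hAeq⟩ := other_elt hA2 hx
  obtain ⟨b1, hb1B, hb1u, hBeq⟩ := other_elt hB2 hu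
  obtain ⟨b3, hb3C, hb3w, hCeq⟩ := other_elt hC2 hw
  have hdAB := rst_disjoint hP A hA B hB hAB
  have hdAC := rst_disjoint hP A hA C hC hAC
  have hdBC := rst_disjoint hP B hB C hC hBC
  -- distinctness of the six vertices
  have hxu : x ≠ u := fun h' => (Finset.disjoint_left.mp hdAB (h' ▸ hx)) hu
  have hxb1 : x ≠ b1 := fun h' => (Finset.disjoint_left.mp hdAB (h' ▸ hx)) hb1B
  have hxw : x ≠ w := fun h' => (Finset.disjoint_left.mp hdAC (h' ▸ hx)) hw
  have hxb3 : x ≠ b3 := fun h' => (Finset.disjoint_left.mp hdAC (h' ▸ hx)) hb3C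
  have hb2u : b2 ≠ u := fun h' => (Finset.disjoint_left.mp hdAB (h' ▸ hb2A)) hu
  have hb2b1 : b2 ≠ b1 := fun h' => (Finset.disjoint_left.mp hdAB (h' ▸ hb2A)) hb1B
  have hb2w : b2 ≠ w := fun h' => (Finset.disjoint_left.mp hdAC (h' ▸ hb2A)) hw
  have hb2b3 : b2 ≠ b3 := fun h' => (Finset.disjoint_left.mp hdAC (h' ▸ hb2A)) hb3C
  have huw : u ≠ w := fun h' => (Finset.disjoint_left.mp hdBC (h' ▸ hu)) hw
  have hub3 : u ≠ b3 := fun h' => (Finset.disjoint_left.mp hdBC (h' ▸ hu)) hb3C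
  have hb1w : b1 ≠ w := fun h' => (Finset.disjoint_left.mp hdBC (h' ▸ hb1B)) hw
  have hb1b3 : b1 ≠ b3 := fun h' => (Finset.disjoint_left.mp hdBC (h' ▸ hb1B)) hb3C
  -- adjacency facts
  have hxb1' : ¬ G.Adj x b1 :=
    (pair_adj h hA hA2 hB hB2 hAB (hpa A hA hA2 B hB hB2 hAB) hx hu hb1B hb1u.symm).mp hux.symm
  have hxb3' : ¬ G.Adj x b3 :=
    (pair_adj h hA hA2 hC hC2 hAC (hpa A hA hA2 C hC hC2 hAC) hx hw hb3C hb3w.symm).mp hwx.symm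
  have hwb1 : G.Adj w b1 := by
    have hiff := pair_adj h hC hC2 hB hB2 hBC.symm (hpa C hC hC2 B hB hB2 hBC.symm)
      hw hu hb1B hb1u.symm
    by_contra hwb1
    exact (fun h' => hnadj h'.symm) (hiff.mpr hwb1)
  have hb1b3' : ¬ G.Adj b1 b3 :=
    (pair_adj h hB hB2 hC hC2 hBC (hpa B hB hB2 C hC hC2 hBC) hb1B hw hb3C hb3w.symm).mp
      hwb1.symm
  -- the recoloring
  set X : Finset V := {x, b1, b3} with hX
  set Y : Finset V := {u, w} with hY
  set S : Finset (Finset V) := {A, B, C} with hS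
  set T : Finset (Finset V) := {X, Y, {b2}} with hT
  have hXcard : X.card = 3 := by
    rw [hX, Finset.card_insert_of_notMem (by simp [hxb1, hxb3]),
      Finset.card_insert_of_notMem (by simp [hb1b3]), Finset.card_singleton]
  have hYcard : Y.card = 2 := by
    rw [hY, Finset.card_insert_of_notMem (by simp [huw]), Finset.card_singleton]
  have hXY : X ≠ Y := fun h' => by rw [h'] at hXcard; omega
  have hXs : X ≠ {b2} := fun h' => by rw [h'] at hXcard; simp at hXcard
  have hYs : Y ≠ {b2} := fun h' => by rw [h'] at hYcard; simp at hYcard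
  have hSsub : S ⊆ P := by
    intro D hD
    rcases Finset.mem_insert.mp hD with rfl | hD'
    · exact hA
    · rcases Finset.mem_insert.mp hD' with rfl | hD''
      · exact hB
      · rw [Finset.mem_singleton.mp hD'']; exact hC
  have hTU : T.biUnion id = X ∪ Y ∪ {b2} := by
    rw [hT, Finset.biUnion_insert, Finset.biUnion_insert, Finset.singleton_biUnion,
      Finset.union_assoc]
    rfl
  have hSU : S.biUnion id = A ∪ B ∪ C := by
    rw [hS, Finset.biUnion_insert, Finset.biUnion_insert, Finset.singleton_biUnion,
      Finset.union_assoc]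
    rfl
  have hUnion : T.biUnion id = S.biUnion id := by
    rw [hTU, hSU, hX, hY, hAeq, hBeq, hCeq]
    ext z
    simp only [Finset.mem_union, Finset.mem_insert, Finset.mem_singleton]
    tauto
  have hmemT : ∀ D ∈ T, D = X ∨ D = Y ∨ D = {b2} := by
    intro D hD
    rcases Finset.mem_insert.mp hD with rfl | hD'
    · exact Or.inl rfl
    · rcases Finset.mem_insert.mp hD' with rfl | hD''
      · exact Or.inr (Or.inl rfl)
      · exact Or.inr (Or.inr (Finset.mem_singleton.mp hD''))
  have hdXY : Disjoint X Y := by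
    rw [hX, hY, Finset.disjoint_left]
    intro z hz hz'
    simp only [Finset.mem_insert, Finset.mem_singleton] at hz hz'
    rcases hz with rfl | rfl | rfl <;> rcases hz' with rfl | rfl <;>
      first
        | exact hxu rfl | exact hxw rfl | exact hb1u.elim rfl | exact hb1w rfl
        | exact hub3.elim rfl | exact hb3w.elim rfl
  have hdXs : Disjoint X ({b2} : Finset V) := by
    rw [hX, Finset.disjoint_right]
    intro z hz hz'
    simp only [Finset.mem_insert, Finset.mem_singleton] at hz hz'
    subst hz
    rcases hz' with rfl | rfl | rfl
    · exact hb2x.elim rfl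
    · exact hb2b1 rfl
    · exact hb2b3 rfl
  have hdYs : Disjoint Y ({b2} : Finset V) := by
    rw [hY, Finset.disjoint_right]
    intro z hz hz'
    simp only [Finset.mem_insert, Finset.mem_singleton] at hz hz'
    subst hz
    rcases hz' with rfl | rfl
    · exact hb2u rfl
    · exact hb2w rfl
  have hTdisj : ∀ D ∈ T, ∀ E ∈ T, D ≠ E → Disjoint D E := by
    intro D hD E hE hDE
    rcases hmemT D hD with rfl | rfl | rfl <;> rcases hmemT E hE with rfl | rfl | rfl <;>
      first
        | exact absurd rfl hDE
        | exact hdXY | exact hdXs | exact hdYs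
        | exact hdXY.symm | exact hdXs.symm | exact hdYs.symm
  have hTne : ∀ D ∈ T, D.Nonempty := by
    intro D hD
    rcases hmemT D hD with rfl | rfl | rfl
    · exact ⟨x, by simp [hX]⟩
    · exact ⟨u, by simp [hY]⟩
    · exact ⟨b2, by simp⟩
  have hTind : ∀ D ∈ T, ∀ p ∈ D, ∀ q ∈ D, ¬ G.Adj p q := by
    intro D hD p hp q hq
    rcases hmemT D hD with rfl | rfl | rfl
    · rw [hX] at hp hq
      simp only [Finset.mem_insert, Finset.mem_singleton] at hp hq
      rcases hp with rfl | rfl | rfl <;> rcases hq with rfl | rfl | rfl <;>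
        first
          | exact G.loopless.irrefl _
          | exact hxb1' | exact hxb3' | exact hb1b3'
          | exact fun h' => hxb1' h'.symm | exact fun h' => hxb3' h'.symm
          | exact fun h' => hb1b3' h'.symm
    · rw [hY] at hp hq
      simp only [Finset.mem_insert, Finset.mem_singleton] at hp hq
      rcases hp with rfl | rfl <;> rcases hq with rfl | rfl <;>
        first
          | exact G.loopless.irrefl _
          | exact hnadj | exact fun h' => hnadj h'.symm
    · simp only [Finset.mem_singleton] at hp hq
      rw [hp, hq]; exact G.loopless.irrefl b2
  have hTcard : ∀ D ∈ T, D.card = 1 ∨ D.card = 2 ∨ D.card = 3 := by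
    intro D hD
    rcases hmemT D hD with rfl | rfl | rfl
    · exact Or.inr (Or.inr hXcard)
    · exact Or.inr (Or.inl hYcard)
    · exact Or.inl (Finset.card_singleton b2)
  have hRST := rst_swap hP S T hSsub hUnion hTdisj hTind hTcard
  have hdisjPT := rst_count_disjoint hP S T hSsub hUnion hTne
  have hcount := rst_count S T hSsub hdisjPT (fun D => D.card = 3)
  have hSfilter : (S.filter (fun D => D.card = 3)).card = 0 := by
    rw [Finset.card_eq_zero, Finset.filter_eq_empty_iff]
    intro D hD
    rcases Finset.mem_insert.mp hD with rfl | hD'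
    · omega
    · rcases Finset.mem_insert.mp hD' with rfl | hD''
      · omega
      · rw [Finset.mem_singleton.mp hD'', hC2]; omega
  have hTfilter : (T.filter (fun D => D.card = 3)).card = 1 := by
    have : T.filter (fun D => D.card = 3) = {X} := by
      ext D
      simp only [Finset.mem_filter, Finset.mem_singleton]
      constructor
      · rintro ⟨hD, hc⟩
        rcases hmemT D hD with rfl | rfl | rfl
        · rfl
        · omega
        · simp at hc
      · rintro rfl
        exact ⟨Finset.mem_insert_self _ _, hXcard⟩
    rw [this, Finset.card_singleton]
  rw [hSfilter, hP.2.2.1, hTfilter] at hcount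
  rcases h.2 _ _ _ _ hRST with h' | ⟨h', _⟩ <;> omega

end AuxLemmas

-- helper: unique other element
lemma unique_other [Fintype V] [DecidableEq V] {U : Finset V} (hU2 : U.card = 2) {v : V} (hv : v ∈ U) :
    ∃! w, w ∈ U ∧ w ≠ v := by
  obtain ⟨u, huU, huv, hUeq⟩ := other_elt hU2 hv
  refine ⟨u, ⟨huU, huv⟩, ?_⟩
  rintro y ⟨hyU, hyv⟩
  rw [hUeq, Finset.mem_insert, Finset.mem_singleton] at hyU
  rcases hyU with rfl | rfl
  · exact absurd rfl hyv
  · rfl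

theorem stmt10 [Fintype V] [DecidableEq V] (G : SimpleGraph V) [DecidableRel G.Adj]
    (P : Finset (Finset V)) (r s t : ℕ)
    (h : IsMaxRST G P r s t)
    (hpair : ∀ U ∈ P, U.card = 2 → ∀ U' ∈ P, U'.card = 2 → U ≠ U' →
      eB G U U' = 2) :
    Nonempty
      ((G.induce (↑((P.filter fun A => A.card = 2).biUnion id) : Set V)) ≃g
        (SimpleGraph.fromRel fun p q : Fin 2 × Fin s => p.1 = q.1)) := by
  classical
  have hP := h.1
  set Q : Finset (Finset V) := P.filter (fun A => A.card = 2) with hQdef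
  have hQmem : ∀ U ∈ Q, U ∈ P ∧ U.card = 2 := fun U hU => Finset.mem_filter.mp hU
  have hQs : Q.card = s := hP.2.2.2.1
  set W : Finset V := Q.biUnion id with hWdef
  have hWmem : ∀ {x : V}, x ∈ W ↔ ∃ U ∈ Q, x ∈ U := by
    intro x
    simp only [hWdef, Finset.mem_biUnion, id]
  rcases Nat.eq_zero_or_pos s with hs | hs
  · subst hs
    have hQempty : Q = ∅ := Finset.card_eq_zero.mp hQs
    have hW : W = ∅ := by rw [hWdef, hQempty]; rfl
    rw [hW, Finset.coe_empty]
    haveI h1 : IsEmpty ((∅ : Set V) : Type _) := Set.isEmpty_coe_sort.mpr rfl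
    haveI h2 : IsEmpty (Fin 2 × Fin 0) := ⟨fun p => p.2.elim0⟩
    exact ⟨⟨Equiv.equivOfIsEmpty _ _, fun {a b} => isEmptyElim a⟩⟩
  -- main case
  have hQdisj : ∀ U ∈ Q, ∀ U' ∈ Q, U ≠ U' → Disjoint U U' := fun U hU U' hU' hne =>
    rst_disjoint hP U (hQmem U hU).1 U' (hQmem U' hU').1 hne
  have hpa2 : ∀ U ∈ Q, ∀ U' ∈ Q, U ≠ U' → eB G U U' = 2 := fun U hU U' hU' hne =>
    hpair U (hQmem U hU).1 (hQmem U hU).2 U' (hQmem U' hU').1 (hQmem U' hU').2 hne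
  -- pair_adj specialized
  have hPA : ∀ U ∈ Q, ∀ U' ∈ Q, U ≠ U' → ∀ v ∈ U, ∀ w ∈ U', ∀ w' ∈ U', w ≠ w' →
      (G.Adj v w ↔ ¬ G.Adj v w') := by
    intro U hU U' hU' hne v hv w hw w' hw' hww'
    exact pair_adj h (hQmem U hU).1 (hQmem U hU).2 (hQmem U' hU').1 (hQmem U' hU').2 hne
      (hpa2 U hU U' hU' hne) hv hw hw' hww'
  have hTR : ∀ A ∈ Q, ∀ B ∈ Q, ∀ C ∈ Q, A ≠ B → A ≠ C → B ≠ C →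
      ∀ x ∈ A, ∀ u ∈ B, ∀ w ∈ C, G.Adj u x → G.Adj w x → G.Adj u w := by
    intro A hA B hB C hC hAB hAC hBC x hx u hu w hw hux hwx
    exact adj_trans h hpair (hQmem A hA).1 (hQmem A hA).2 (hQmem B hB).1 (hQmem B hB).2
      (hQmem C hC).1 (hQmem C hC).2 hAB hAC hBC hx hu hw hux hwx
  -- the equivalence Fin s ≃ Q
  have e : Fin s ≃ {x // x ∈ Q} := (finCongr hQs.symm).trans Q.equivFin.symm
  set U₀ : Finset V := (e ⟨0, hs⟩ : {x // x ∈ Q}).val with hU₀def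
  have hU₀Q : U₀ ∈ Q := (e ⟨0, hs⟩).property
  obtain ⟨a₀, ha₀⟩ : ∃ a, a ∈ U₀ := Finset.card_pos.mp (by rw [(hQmem U₀ hU₀Q).2]; omega)
  -- unique neighbor of a₀ in U ≠ U₀
  have hnbr : ∀ U ∈ Q, U ≠ U₀ → ∃! w, w ∈ U ∧ G.Adj a₀ w := by
    intro U hU hne
    obtain ⟨c, d, hcd, hUeq⟩ := Finset.card_eq_two.mp (hQmem U hU).2
    have hcU : c ∈ U := by rw [hUeq]; simp
    have hdU : d ∈ U := by rw [hUeq]; simp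
    have hiff := hPA U₀ hU₀Q U hU (Ne.symm hne) a₀ ha₀ c hcU d hdU hcd
    by_cases hac : G.Adj a₀ c
    · refine ⟨c, ⟨hcU, hac⟩, ?_⟩
      rintro y ⟨hyU, hay⟩
      rw [hUeq, Finset.mem_insert, Finset.mem_singleton] at hyU
      rcases hyU with rfl | rfl
      · rfl
      · exact absurd hay (hiff.mp hac)
    · have had : G.Adj a₀ d := by
        by_contra had
        exact hac (hiff.mpr had)
      refine ⟨d, ⟨hdU, had⟩, ?_⟩
      rintro y ⟨hyU, hay⟩
      rw [hUeq, Finset.mem_insert, Finset.mem_singleton] at hyU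
      rcases hyU with rfl | rfl
      · exact absurd hay hac
      · rfl
  -- define f0 and f1
  set f0 : Finset V → V := fun U =>
    if hc : U ∈ Q ∧ U ≠ U₀ then (hnbr U hc.1 hc.2).choose else a₀ with hf0def
  have hf0U₀ : f0 U₀ = a₀ := by
    rw [hf0def]; simp
  have hf0spec : ∀ U ∈ Q, U ≠ U₀ → (f0 U ∈ U ∧ G.Adj a₀ (f0 U)) := by
    intro U hU hne
    have : f0 U = (hnbr U hU hne).choose := by rw [hf0def]; simp [hU, hne]
    rw [this]
    exact (hnbr U hU hne).choose_spec.1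
  have hf0mem : ∀ U ∈ Q, f0 U ∈ U := by
    intro U hU
    by_cases hne : U = U₀
    · rw [hne, hf0U₀]; exact ha₀
    · exact (hf0spec U hU hne).1
  set f1 : Finset V → V := fun U =>
    if hc : U ∈ Q then (unique_other (hQmem U hc).2 (hf0mem U hc)).choose else a₀ with hf1def
  have hf1spec : ∀ U ∈ Q, f1 U ∈ U ∧ f1 U ≠ f0 U := by
    intro U hU
    have : f1 U = (unique_other (hQmem U hU).2 (hf0mem U hU)).choose := by
      rw [hf1def]; simp [hU]
    rw [this]
    exact (unique_other (hQmem U hU).2 (hf0mem U hU)).choose_spec.1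
  have hUeq2 : ∀ U ∈ Q, U = {f0 U, f1 U} := by
    intro U hU
    obtain ⟨u, huU, huv, hUeq⟩ := other_elt (hQmem U hU).2 (hf0mem U hU)
    have : f1 U = u := by
      obtain ⟨w, hw, huniq⟩ := unique_other (hQmem U hU).2 (hf0mem U hU)
      have h1 := huniq (f1 U) ⟨(hf1spec U hU).1, (hf1spec U hU).2⟩
      have h2 := huniq u ⟨huU, huv⟩
      rw [h1, h2]
    rw [this]; exact hUeq
  -- a₀ adjacency characterization: for U ≠ U₀, Adj a₀ (f0 U) and ¬ Adj a₀ (f1 U)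
  have ha₀f1 : ∀ U ∈ Q, U ≠ U₀ → ¬ G.Adj a₀ (f1 U) := by
    intro U hU hne
    have hiff := hPA U₀ hU₀Q U hU (Ne.symm hne) a₀ ha₀ (f0 U) (hf0mem U hU)
      (f1 U) (hf1spec U hU).1 (Ne.symm (hf1spec U hU).2)
    exact hiff.mp (hf0spec U hU hne).2
  -- key adjacency lemma: f0's are pairwise adjacent
  have hL0 : ∀ U ∈ Q, ∀ U' ∈ Q, U ≠ U' → G.Adj (f0 U) (f0 U') := by
    intro U hU U' hU' hne
    by_cases h1 : U = U₀
    · subst h1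
      rw [hf0U₀]
      exact (hf0spec U' hU' (fun h' => hne h'.symm)).2
    · by_cases h2 : U' = U₀
      · subst h2
        rw [hf0U₀]
        exact ((hf0spec U hU h1).2).symm
      · exact hTR U₀ hU₀Q U hU U' hU' (Ne.symm h1) (Ne.symm h2) hne a₀ ha₀
          (f0 U) (hf0mem U hU) (f0 U') (hf0mem U' hU') (hf0spec U hU h1).2.symm
          (hf0spec U' hU' h2).2.symm
  -- cross non-adjacency
  have hL01 : ∀ U ∈ Q, ∀ U' ∈ Q, U ≠ U' → ¬ G.Adj (f0 U) (f1 U') := by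
    intro U hU U' hU' hne
    have hiff := hPA U hU U' hU' hne (f0 U) (hf0mem U hU) (f0 U') (hf0mem U' hU')
      (f1 U') (hf1spec U' hU').1 (Ne.symm (hf1spec U' hU').2)
    exact hiff.mp (hL0 U hU U' hU' hne)
  -- f1's pairwise adjacent
  have hL1 : ∀ U ∈ Q, ∀ U' ∈ Q, U ≠ U' → G.Adj (f1 U) (f1 U') := by
    intro U hU U' hU' hne
    have hiff := hPA U' hU' U hU (Ne.symm hne) (f1 U') (hf1spec U' hU').1
      (f1 U) (hf1spec U hU).1 (f0 U) (hf0mem U hU) (hf1spec U hU).2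
    exact (hiff.mpr (fun hh => hL01 U hU U' hU' hne hh.symm)).symm
  -- independence within a class
  have hInd : ∀ U ∈ Q, ∀ p ∈ U, ∀ q ∈ U, ¬ G.Adj p q := fun U hU =>
    hP.2.1 U (hQmem U hU).1
  have hL01' : ∀ U ∈ Q, ∀ U' ∈ Q, U ≠ U' → ¬ G.Adj (f1 U) (f0 U') := by
    intro U hU U' hU' hne hadj
    exact hL01 U' hU' U hU (Ne.symm hne) hadj.symm
  -- the vertex map
  have hval : ∀ j : Fin s, (e j).val ∈ Q := fun j => (e j).2
  have hvalinj : ∀ j j' : Fin s, (e j).val = (e j').val → j = j' := by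
    intro j j' hjj'
    exact e.injective (Subtype.ext hjj')
  set φ : Fin 2 × Fin s → V := fun p =>
    if p.1 = 0 then f0 (e p.2).val else f1 (e p.2).val with hφdef
  have hφmemU : ∀ p : Fin 2 × Fin s, φ p ∈ (e p.2).val := by
    intro p
    rw [hφdef]
    by_cases h0 : p.1 = 0
    · simp only [h0, if_true]
      exact hf0mem _ (hval p.2)
    · simp only [h0, if_false]
      exact (hf1spec _ (hval p.2)).1
  have hφmem : ∀ p : Fin 2 × Fin s, φ p ∈ (↑W : Set V) := by
    intro p
    exact Finset.mem_coe.mpr (hWmem.mpr ⟨(e p.2).val, hval p.2, hφmemU p⟩)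
  have hfin2 : ∀ i i' : Fin 2, i ≠ 0 → i' ≠ 0 → i = i' := by decide
  -- adjacency characterization
  have hφ0 : ∀ p : Fin 2 × Fin s, p.1 = 0 → φ p = f0 (e p.2).val := by
    intro p h0
    rw [hφdef]
    simp only [h0, if_true]
  have hφ1 : ∀ p : Fin 2 × Fin s, p.1 ≠ 0 → φ p = f1 (e p.2).val := by
    intro p h0
    rw [hφdef]
    simp only [h0, if_false]
  have hrel : ∀ p q : Fin 2 × Fin s,
      G.Adj (φ p) (φ q) ↔ (p ≠ q ∧ (p.1 = q.1 ∨ q.1 = p.1)) := by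
    intro p q
    by_cases hj : p.2 = q.2
    · have hUU : (e p.2).val = (e q.2).val := by rw [hj]
      constructor
      · intro hadj
        exact absurd hadj (hInd _ (hval p.2) _ (hφmemU p) _ (hUU ▸ hφmemU q))
      · rintro ⟨hne, hor⟩
        have h1 : p.1 = q.1 := hor.elim id Eq.symm
        exact absurd (Prod.ext h1 hj) hne
    · have hUU : (e p.2).val ≠ (e q.2).val := fun h' => hj (hvalinj _ _ h')
      have hpq : p ≠ q := fun h' => hj (congrArg Prod.snd h')
      by_cases h0 : p.1 = 0 <;> by_cases h0' : q.1 = 0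
      · rw [hφ0 p h0, hφ0 q h0']
        exact ⟨fun _ => ⟨hpq, Or.inl (h0.trans h0'.symm)⟩,
          fun _ => hL0 _ (hval p.2) _ (hval q.2) hUU⟩
      · rw [hφ0 p h0, hφ1 q h0']
        constructor
        · intro hadj
          exact absurd hadj (hL01 _ (hval p.2) _ (hval q.2) hUU)
        · rintro ⟨-, hor⟩
          have h1 : p.1 = q.1 := hor.elim id Eq.symm
          exact absurd (h1 ▸ h0) h0'
      · rw [hφ1 p h0, hφ0 q h0']
        constructor
        · intro hadj
          exact absurd hadj (hL01' _ (hval p.2) _ (hval q.2) hUU)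
        · rintro ⟨-, hor⟩
          have h1 : q.1 = p.1 := hor.elim Eq.symm id
          exact absurd (h1 ▸ h0') h0
      · rw [hφ1 p h0, hφ1 q h0']
        exact ⟨fun _ => ⟨hpq, Or.inl (hfin2 _ _ h0 h0')⟩,
          fun _ => hL1 _ (hval p.2) _ (hval q.2) hUU⟩
  -- bijectivity
  set ψ : Fin 2 × Fin s → (↑W : Set V) := fun p => ⟨φ p, hφmem p⟩ with hψdef
  have hinj : Function.Injective ψ := by
    intro p q hpq
    have hφeq : φ p = φ q := congrArg Subtype.val hpq
    have hj : p.2 = q.2 := by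
      by_contra hj
      have hUU : (e p.2).val ≠ (e q.2).val := fun h' => hj (hvalinj _ _ h')
      exact (Finset.disjoint_left.mp
        (hQdisj _ (hval p.2) _ (hval q.2) hUU) (hφmemU p)) (hφeq ▸ hφmemU q)
    have hUU : (e p.2).val = (e q.2).val := by rw [hj]
    have h1 : p.1 = q.1 := by
      by_contra h1
      rw [hφdef] at hφeq
      by_cases h0 : p.1 = 0 <;> by_cases h0' : q.1 = 0
      · exact h1 (h0.trans h0'.symm)
      · simp only [h0, h0', if_true, if_false] at hφeq
        exact (hf1spec _ (hval q.2)).2 (hUU ▸ hφeq).symm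
      · simp only [h0, h0', if_true, if_false] at hφeq
        exact (hf1spec _ (hval p.2)).2 (hUU ▸ hφeq)
      · exact h1 (hfin2 _ _ h0 h0')
    exact Prod.ext h1 hj
  have hsurj : Function.Surjective ψ := by
    rintro ⟨x, hx⟩
    obtain ⟨U, hU, hxU⟩ := hWmem.mp (Finset.mem_coe.mp hx)
    set j : Fin s := e.symm ⟨U, hU⟩ with hjdef
    have hUj : (e j).val = U := by rw [hjdef, Equiv.apply_symm_apply]
    have hxU' : x ∈ ({f0 U, f1 U} : Finset V) := (hUeq2 U hU) ▸ hxU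
    rw [Finset.mem_insert, Finset.mem_singleton] at hxU'
    rcases hxU' with rfl | rfl
    · refine ⟨(⟨0, j⟩ : Fin 2 × Fin s), ?_⟩
      apply Subtype.ext
      show φ (0, j) = f0 U
      rw [hφdef]
      simp only [if_true]
      rw [hUj]
    · refine ⟨(⟨1, j⟩ : Fin 2 × Fin s), ?_⟩
      apply Subtype.ext
      show φ (1, j) = f1 U
      rw [hφdef]
      norm_num
      rw [hUj]
  -- build the isomorphism
  refine ⟨(SimpleGraph.Iso.symm ⟨Equiv.ofBijective ψ ⟨hinj, hsurj⟩, ?_⟩)⟩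
  intro p q
  rw [SimpleGraph.fromRel_adj]
  have hLHS : (G.induce (↑W : Set V)).Adj (ψ p) (ψ q) ↔ G.Adj (φ p) (φ q) := Iff.rfl
  rw [show (Equiv.ofBijective ψ ⟨hinj, hsurj⟩) p = ψ p from rfl,
    show (Equiv.ofBijective ψ ⟨hinj, hsurj⟩) q = ψ q from rfl, hLHS]
  exact hrel p q
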